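/- For every natural number n and all integers m, p, the sum over j from 0 to n of (-1)^j * C(n, j) * P_{(m-1)n + p + 2j} equals (-1)^n * P_{(m-2)n + p}. -/
import Mathlib

theorem aux18 (P : ℤ → ℤ)
    (hP : ∀ n : ℤ, P n = P (n - 2) + P (n - 3)) :
    ∀ (n : ℕ) (a : ℤ),
      ∑ j ∈ Finset.range (n + 1),
        (-1 : ℤ) ^ j * (Nat.choose n j : ℤ) * P (a + 2 * j)
      = (-1 : ℤ) ^ n * P (a - n) := by
  intro n
  induction n with
  | zero => intro a; simp
  | succ n ih =>
    intro a
    have hA := ih a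
    have hB := ih (a + 2)
    have hsplit :
        ∑ j ∈ Finset.range (n + 2),
          (-1 : ℤ) ^ j * (Nat.choose (n+1) j : ℤ) * P (a + 2 * j)
        = (∑ j ∈ Finset.range (n + 2),
            (-1 : ℤ) ^ j * (Nat.choose n j : ℤ) * P (a + 2 * j))
          - ∑ j ∈ Finset.range (n + 1),
            (-1 : ℤ) ^ j * (Nat.choose n j : ℤ) * P ((a + 2) + 2 * j) := by
      rw [Finset.sum_range_succ' (fun j => (-1 : ℤ) ^ j * (Nat.choose (n+1) j : ℤ) * P (a + 2 * j)),
          Finset.sum_range_succ' (fun j => (-1 : ℤ) ^ j * (Nat.choose n j : ℤ) * P (a + 2 * j))]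
      have key : ∀ k ∈ Finset.range (n+1),
          (-1 : ℤ) ^ (k+1) * (Nat.choose (n+1) (k+1) : ℤ) * P (a + 2 * ((k:ℤ)+1))
          = ((-1 : ℤ) ^ (k+1) * (Nat.choose n (k+1) : ℤ) * P (a + 2 * ((k:ℤ)+1))
             - (-1 : ℤ) ^ k * (Nat.choose n k : ℤ) * P ((a + 2) + 2 * k)) := by
        intro k _
        have hc : (Nat.choose (n+1) (k+1) : ℤ) = Nat.choose n k + Nat.choose n (k+1) := by
          rw [Nat.choose_succ_succ]; push_cast; ring
        rw [hc]
        have : a + 2 * ((k:ℤ)+1) = (a + 2) + 2 * k := by ring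
        rw [this]
        ring
      push_cast
      rw [Finset.sum_congr rfl key, Finset.sum_sub_distrib]
      simp [Nat.choose_zero_right]
      ring
    have hlast : ((Nat.choose n (n+1) : ℤ)) = 0 := by
      simp [Nat.choose_eq_zero_of_lt]
    rw [hsplit, Finset.sum_range_succ, hlast]
    rw [hA, hB]
    have hrec2 := hP (a + 2 - n)
    have hr : P (a + 2 - n) = P (a - n) + P (a - ((n:ℤ)+1)) := by
      rw [hrec2]; ring_nf
    rw [hr]
    push_cast
    ring

theorem stmt18 (P : ℤ → ℤ)
    (hP : ∀ n : ℤ, P n = P (n - 2) + P (n - 3))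
    (hP0 : P 0 = 1) (hP1 : P 1 = 1) (hP2 : P 2 = 1) :
    ∀ (n : ℕ) (m p : ℤ),
      ∑ j ∈ Finset.range (n + 1),
        (-1 : ℤ) ^ j * (Nat.choose n j : ℤ) * P ((m - 1) * n + p + 2 * j)
      = (-1 : ℤ) ^ n * P ((m - 2) * n + p) := by
  intro n m p
  have h := aux18 P hP n ((m - 1) * n + p)
  have h2 : (m - 1) * (n:ℤ) + p - n = (m - 2) * n + p := by ring
  rw [h2] at h
  exact h
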